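/- Rényi-divergence lower bound on β: for probability measures P, Q, every α ∈ (0,1), and every λ > 1, β_α(P,Q) ≥ α^{λ/(λ−1)} · ( exp((λ−1) D_λ(P||Q)) − (1−α)^λ )^{−1/(λ−1)}, where D_λ is the Rényi divergence of order λ. -/

import Mathlib

open MeasureTheory

/-- Minimal type-II error over randomized (`[0,1]`-valued) tests with
type-I success probability at least `α`. -/
noncomputable def beta {W : Type*} [MeasurableSpace W] (α : ℝ) (P Q : MeasureTheory.Measure W) : ℝ :=
  sInf {b : ℝ | ∃ T : W → ℝ, Measurable T ∧ (∀ w, T w ∈ Set.Icc (0:ℝ) 1) ∧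
    α ≤ ∫ w, T w ∂P ∧ b = ∫ w, T w ∂Q}

lemma holder_aux {W : Type*} [MeasurableSpace W] (Q : Measure W) [IsProbabilityMeasure Q]
    {lam : ℝ} (hlam : 1 < lam) {S r : W → ℝ} (hS : Measurable S)
    (hS01 : ∀ w, S w ∈ Set.Icc (0:ℝ) 1) (hr : Measurable r) (hr0 : ∀ w, 0 ≤ r w)
    (hint : Integrable (fun w => r w ^ lam) Q) :
    ∫ w, S w * r w ∂Q ≤
      (∫ w, S w ∂Q) ^ (1 - 1/lam) * (∫ w, S w * r w ^ lam ∂Q) ^ (1/lam) := by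
  have hl0 : (0:ℝ) < lam := lt_trans one_pos hlam
  have hl1 : (0:ℝ) < lam - 1 := by linarith
  set p : ℝ := lam / (lam - 1) with hp_def
  have hpq : p.HolderConjugate lam := by
    rw [hp_def]; exact (Real.HolderConjugate.conjExponent hlam).symm
  set f : W → ℝ := fun w => S w ^ (1 - 1/lam) with hf_def
  set g : W → ℝ := fun w => S w ^ (1/lam) * r w with hg_def
  have hS0 : ∀ w, 0 ≤ S w := fun w => (hS01 w).1
  have hS1 : ∀ w, S w ≤ 1 := fun w => (hS01 w).2
  have hexp0 : (0:ℝ) ≤ 1 - 1/lam := by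
    have : 1/lam < 1 := by rw [div_lt_one hl0]; linarith
    linarith
  have hf01 : ∀ w, f w ∈ Set.Icc (0:ℝ) 1 := by
    intro w
    exact ⟨Real.rpow_nonneg (hS0 w) _, Real.rpow_le_one (hS0 w) (hS1 w) hexp0⟩
  have hfmeas : Measurable f := (hS.pow_const _)
  have hgmeas : Measurable g := ((hS.pow_const _)).mul hr
  have hgq : ∀ w, g w ^ lam = S w * r w ^ lam := by
    intro w
    rw [Real.mul_rpow (Real.rpow_nonneg (hS0 w) _) (hr0 w), ← Real.rpow_mul (hS0 w),
      one_div, inv_mul_cancel₀ (ne_of_gt hl0), Real.rpow_one]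
  have hg0 : ∀ w, 0 ≤ g w := fun w => mul_nonneg (Real.rpow_nonneg (hS0 w) _) (hr0 w)
  have hgint : Integrable (fun w => g w ^ lam) Q := by
    refine hint.mono' (hgmeas.pow_const lam |>.aestronglyMeasurable)
      (Filter.Eventually.of_forall fun w => ?_)
    rw [Real.norm_of_nonneg (Real.rpow_nonneg (hg0 w) _), hgq w]
    exact mul_le_of_le_one_left (Real.rpow_nonneg (hr0 w) _) (hS1 w)
  have hf_mem : MemLp f (ENNReal.ofReal p) Q :=
    memLp_of_bounded (Filter.Eventually.of_forall hf01) hfmeas.aestronglyMeasurable _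
  have hq0 : (ENNReal.ofReal lam) ≠ 0 := by
    simp only [ne_eq, ENNReal.ofReal_eq_zero, not_le]; linarith
  have hg_mem : MemLp g (ENNReal.ofReal lam) Q := by
    refine (memLp_norm_rpow_iff (q := ENNReal.ofReal lam) (p := ENNReal.ofReal lam)
      hgmeas.aestronglyMeasurable hq0 ENNReal.ofReal_ne_top).mp ?_
    rw [ENNReal.div_self hq0 ENNReal.ofReal_ne_top, ENNReal.toReal_ofReal hl0.le,
      memLp_one_iff_integrable]
    refine hgint.congr (Filter.Eventually.of_forall fun w => ?_)
    simp only [Real.norm_of_nonneg (hg0 w)]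
  have hfg : ∀ w, S w * r w = f w * g w := by
    intro w
    simp only [hf_def, hg_def]
    rw [← mul_assoc, ← Real.rpow_add' (hS0 w) (by norm_num),
      show (1 - 1/lam) + 1/lam = 1 by ring, Real.rpow_one]
  have hfp : ∀ w, f w ^ p = S w := by
    intro w
    simp only [hf_def]
    rw [← Real.rpow_mul (hS0 w), show (1 - 1/lam) * p = 1 by
      rw [hp_def]; field_simp, Real.rpow_one]
  calc ∫ w, S w * r w ∂Q = ∫ w, f w * g w ∂Q := by
        exact integral_congr_ae (Filter.Eventually.of_forall fun w => hfg w)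
    _ ≤ (∫ w, f w ^ p ∂Q) ^ (1/p) * (∫ w, g w ^ lam ∂Q) ^ (1/lam) :=
        integral_mul_le_Lp_mul_Lq_of_nonneg hpq
          (Filter.Eventually.of_forall fun w => (hf01 w).1)
          (Filter.Eventually.of_forall hg0) hf_mem hg_mem
    _ = (∫ w, S w ∂Q) ^ (1 - 1/lam) * (∫ w, S w * r w ^ lam ∂Q) ^ (1/lam) := by
        rw [show (1:ℝ)/p = 1 - 1/lam by rw [hp_def]; field_simp]
        congr 2
        · exact integral_congr_ae (Filter.Eventually.of_forall fun w => hfp w)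
        · exact integral_congr_ae (Filter.Eventually.of_forall fun w => hgq w)

lemma arith_aux {a b c lam : ℝ} (ha : 0 < a) (hb : 0 ≤ b) (hc : 0 < c) (hlam : 1 < lam)
    (h : a ≤ b ^ (1 - 1/lam) * c ^ (1/lam)) :
    a ^ (lam / (lam - 1)) * c ^ (-(1 : ℝ) / (lam - 1)) ≤ b := by
  have hl0 : (0:ℝ) < lam := lt_trans one_pos hlam
  have hl1 : (0:ℝ) < lam - 1 := by linarith
  have ht : (0:ℝ) < lam / (lam - 1) := by positivity
  have hpow := Real.rpow_le_rpow ha.le h ht.le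
  rw [Real.mul_rpow (Real.rpow_nonneg hb _) (Real.rpow_nonneg hc.le _),
    ← Real.rpow_mul hb, ← Real.rpow_mul hc.le,
    show (1 - 1/lam) * (lam/(lam-1)) = 1 by field_simp,
    show (1/lam) * (lam/(lam-1)) = 1/(lam-1) by field_simp,
    Real.rpow_one] at hpow
  have hcc : c ^ ((1:ℝ)/(lam-1)) * c ^ (-(1:ℝ)/(lam-1)) = 1 := by
    rw [← Real.rpow_add hc, show (1:ℝ)/(lam-1) + -(1:ℝ)/(lam-1) = 0 by ring, Real.rpow_zero]
  calc a ^ (lam/(lam-1)) * c ^ (-(1:ℝ)/(lam-1))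
      ≤ (b * c ^ ((1:ℝ)/(lam-1))) * c ^ (-(1:ℝ)/(lam-1)) :=
        mul_le_mul_of_nonneg_right hpow (Real.rpow_nonneg hc.le _)
    _ = b := by rw [mul_assoc, hcc, mul_one]

theorem beta_renyi_lb {W : Type*} [MeasurableSpace W]
    (P Q : Measure W) [IsProbabilityMeasure P] [IsProbabilityMeasure Q]
    (hac : P ≪ Q) (α lam : ℝ) (hα : α ∈ Set.Ioo (0 : ℝ) 1) (hlam : 1 < lam)
    (hfin : Integrable (fun w => ((P.rnDeriv Q w).toReal) ^ lam) Q)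
    (D : ℝ) (hD : D = (1 / (lam - 1)) * Real.log (∫ w, ((P.rnDeriv Q w).toReal) ^ lam ∂Q))
    (hgt : (1 - α) ^ lam < Real.exp ((lam - 1) * D)) :
    α ^ (lam / (lam - 1)) * (Real.exp ((lam - 1) * D) - (1 - α) ^ lam) ^ (-(1 : ℝ) / (lam - 1))
      ≤ beta α P Q := by
  obtain ⟨hα0, hα1⟩ := hα
  have hl0 : (0:ℝ) < lam := lt_trans one_pos hlam
  have hl1 : (0:ℝ) < lam - 1 := by linarith
  set r : W → ℝ := fun w => (P.rnDeriv Q w).toReal with hr_def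
  have hr : Measurable r := (Measure.measurable_rnDeriv P Q).ennreal_toReal
  have hr0 : ∀ w, 0 ≤ r w := fun w => ENNReal.toReal_nonneg
  have hrint : ∫ w, r w ∂Q = 1 := by
    rw [hr_def, Measure.integral_toReal_rnDeriv hac]; simp
  set M : ℝ := ∫ w, r w ^ lam ∂Q with hM_def
  have hM0 : (0:ℝ) ≤ M := integral_nonneg fun w => Real.rpow_nonneg (hr0 w) _
  have h1M : (1:ℝ) ≤ M ^ ((1:ℝ)/lam) := by
    have := holder_aux Q hlam (S := fun _ => (1:ℝ)) measurable_const
      (fun w => by simp) hr hr0 hfin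
    simpa [hrint] using this
  have hM1 : (1:ℝ) ≤ M := by
    by_contra hcon
    push_neg at hcon
    have := Real.rpow_lt_one hM0 hcon (by positivity : (0:ℝ) < 1/lam)
    linarith
  have hexpM : Real.exp ((lam - 1) * D) = M := by
    rw [hD, show (lam-1) * ((1/(lam-1)) * Real.log M) = Real.log M by field_simp]
    exact Real.exp_log (by linarith)
  rw [hexpM]
  set c : ℝ := M - (1 - α) ^ lam with hc_def
  have hc : 0 < c := by rw [hc_def]; rw [hexpM] at hgt; linarith
  refine le_csInf ⟨∫ w, (1:ℝ) ∂Q, fun _ => 1, measurable_const,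
    fun w => by simp, by simp [hα1.le], rfl⟩ ?_
  rintro b ⟨T, hT, hT01, hTa, rfl⟩
  set a : ℝ := ∫ w, T w ∂P with ha_def
  have ha : 0 < a := lt_of_lt_of_le hα0 hTa
  set s : ℝ := α / a with hs_def
  have hs0 : 0 < s := div_pos hα0 ha
  have hs1 : s ≤ 1 := (div_le_one ha).mpr hTa
  set S : W → ℝ := fun w => s * T w with hS_def
  have hSmeas : Measurable S := measurable_const.mul hT
  have hS01 : ∀ w, S w ∈ Set.Icc (0:ℝ) 1 := fun w =>
    ⟨mul_nonneg hs0.le (hT01 w).1, mul_le_one₀ hs1 (hT01 w).1 (hT01 w).2⟩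
  have hSP : ∫ w, S w ∂P = α := by
    rw [hS_def]
    simp only []
    rw [integral_const_mul, ← ha_def, hs_def, div_mul_cancel₀ _ (ne_of_gt ha)]
  have hSrQ : ∫ w, S w * r w ∂Q = α := by
    rw [← hSP]
    have := integral_rnDeriv_smul (μ := P) (ν := Q) hac (f := S)
    simp only [smul_eq_mul] at this
    rw [← this]
    exact integral_congr_ae (Filter.Eventually.of_forall fun w => mul_comm _ _)
  -- integrabilities
  have hSQint : Integrable S Q := by
    refine (integrable_const (1:ℝ)).mono' hSmeas.aestronglyMeasurable
      (Filter.Eventually.of_forall fun w => ?_)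
    rw [Real.norm_of_nonneg (hS01 w).1]; exact (hS01 w).2
  have hSrlam_int : Integrable (fun w => S w * r w ^ lam) Q := by
    refine hfin.mono' ((hSmeas.mul (hr.pow_const lam)).aestronglyMeasurable)
      (Filter.Eventually.of_forall fun w => ?_)
    rw [Real.norm_of_nonneg (mul_nonneg (hS01 w).1 (Real.rpow_nonneg (hr0 w) _))]
    exact mul_le_of_le_one_left (Real.rpow_nonneg (hr0 w) _) (hS01 w).2
  -- step B : bound on ∫ (1-S) r^lam
  have h1S01 : ∀ w, (1 - S w) ∈ Set.Icc (0:ℝ) 1 := fun w =>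
    ⟨by linarith [(hS01 w).2], by linarith [(hS01 w).1]⟩
  have h1SrQ : ∫ w, (1 - S w) * r w ∂Q = 1 - α := by
    have := integral_rnDeriv_smul (μ := P) (ν := Q) hac (f := fun w => 1 - S w)
    simp only [smul_eq_mul] at this
    rw [show (∫ w, (1 - S w) * r w ∂Q) = ∫ w, r w * (1 - S w) ∂Q from
      integral_congr_ae (Filter.Eventually.of_forall fun w => mul_comm _ _), this,
      integral_sub (integrable_const 1) ?_, hSP]
    · simp
    · refine (integrable_const (1:ℝ)).mono' hSmeas.aestronglyMeasurable
        (Filter.Eventually.of_forall fun w => ?_)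
      rw [Real.norm_of_nonneg (hS01 w).1]; exact (hS01 w).2
  have key2 := holder_aux Q hlam (S := fun w => 1 - S w) ((measurable_const.sub hSmeas))
    h1S01 hr hr0 hfin
  rw [h1SrQ] at key2
  have h1SQ_le : ∫ w, (1 - S w) ∂Q ≤ 1 := by
    calc ∫ w, (1 - S w) ∂Q ≤ ∫ _, (1:ℝ) ∂Q := by
          refine integral_mono ((integrable_const 1).sub hSQint) (integrable_const 1)
            fun w => (h1S01 w).2
      _ = 1 := by simp
  have hb2 : (∫ w, (1 - S w) ∂Q) ^ (1 - 1/lam) ≤ 1 :=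
    Real.rpow_le_one (integral_nonneg fun w => (h1S01 w).1) h1SQ_le
      (by rw [sub_nonneg, div_le_one hl0]; linarith)
  have hK0 : (0:ℝ) ≤ ∫ w, (1 - S w) * r w ^ lam ∂Q :=
    integral_nonneg fun w => mul_nonneg (h1S01 w).1 (Real.rpow_nonneg (hr0 w) _)
  have key2' : 1 - α ≤ (∫ w, (1 - S w) * r w ^ lam ∂Q) ^ ((1:ℝ)/lam) := by
    calc 1 - α ≤ (∫ w, (1 - S w) ∂Q) ^ (1 - 1/lam) *
          (∫ w, (1 - S w) * r w ^ lam ∂Q) ^ ((1:ℝ)/lam) := key2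
      _ ≤ 1 * (∫ w, (1 - S w) * r w ^ lam ∂Q) ^ ((1:ℝ)/lam) :=
          mul_le_mul_of_nonneg_right hb2 (Real.rpow_nonneg hK0 _)
      _ = _ := one_mul _
  have hstepB : (1 - α) ^ lam ≤ ∫ w, (1 - S w) * r w ^ lam ∂Q := by
    have := Real.rpow_le_rpow (by linarith : (0:ℝ) ≤ 1 - α) key2' hl0.le
    rwa [← Real.rpow_mul hK0, one_div, inv_mul_cancel₀ (ne_of_gt hl0),
      Real.rpow_one] at this
  have hsplit : ∫ w, (1 - S w) * r w ^ lam ∂Q = M - ∫ w, S w * r w ^ lam ∂Q := by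
    rw [show (fun w => (1 - S w) * r w ^ lam) = fun w => r w ^ lam - S w * r w ^ lam from
      funext fun w => by ring, integral_sub hfin hSrlam_int, hM_def]
  have hK : ∫ w, S w * r w ^ lam ∂Q ≤ c := by
    rw [hsplit] at hstepB; rw [hc_def]; linarith
  -- step A : main Hölder
  have key1 := holder_aux Q hlam hSmeas hS01 hr hr0 hfin
  rw [hSrQ] at key1
  have hbQ0 : (0:ℝ) ≤ ∫ w, S w ∂Q := integral_nonneg fun w => (hS01 w).1
  have key1' : α ≤ (∫ w, S w ∂Q) ^ (1 - 1/lam) * c ^ ((1:ℝ)/lam) := by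
    refine le_trans key1 (mul_le_mul_of_nonneg_left ?_ (Real.rpow_nonneg hbQ0 _))
    exact Real.rpow_le_rpow (integral_nonneg fun w =>
      mul_nonneg (hS01 w).1 (Real.rpow_nonneg (hr0 w) _)) hK (by positivity)
  have hfinal := arith_aux hα0 hbQ0 hc hlam key1'
  refine le_trans hfinal ?_
  rw [hS_def]
  simp only []
  rw [integral_const_mul]
  exact mul_le_of_le_one_left (integral_nonneg fun w => (hT01 w).1) hs1
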